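/- Let G be a locally compact SIN Hausdorff topological group such that every closed subgroup of G is totally minimal. Then G is hereditarily h-complete. -/

import Mathlib

universe u v

open Set.Notation

/-- A Hausdorff topological group is h-complete if its image under every continuous
homomorphism into a Hausdorff topological group is closed. -/
def IsHComplete (G : Type u) [Group G] [TopologicalSpace G] : Prop :=
  ∀ (H : Type v) [Group H] [TopologicalSpace H] [IsTopologicalGroup H] [T2Space H]
    (f : G →* H), Continuous f → IsClosed (Set.range f)

/-- A Hausdorff topological group is hereditarily h-complete if every closed
subgroup of it is h-complete. -/
def IsHereditarilyHComplete (G : Type u) [Group G] [TopologicalSpace G] : Prop :=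
  ∀ S : Subgroup G, IsClosed (S : Set G) → IsHComplete.{u, v} S

/-- A Hausdorff topological group is totally minimal if every continuous surjective
homomorphism onto a Hausdorff topological group is open. -/
def IsTotallyMinimal (G : Type u) [Group G] [TopologicalSpace G] : Prop :=
  ∀ (H : Type v) [Group H] [TopologicalSpace H] [IsTopologicalGroup H] [T2Space H]
    (f : G →* H), Continuous f → Function.Surjective f → IsOpenMap f

/-- A topological group is SIN if every identity neighborhood contains an identity
neighborhood invariant under all conjugations. -/
def IsSIN (G : Type*) [Group G] [TopologicalSpace G] : Prop :=
  ∀ U ∈ nhds (1 : G), ∃ V ∈ nhds (1 : G), V ⊆ U ∧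
    ∀ g : G, (fun x => g * x * g⁻¹) '' V = V

/-- A locally compact subspace of a Hausdorff space is locally closed. -/
lemma aux_isLocallyClosed {H : Type*} [TopologicalSpace H] [T2Space H] (s : Set H)
    [LocallyCompactSpace s] : IsLocallyClosed s := by
  refine ((isLocallyClosed_tfae s).out 0 2).mpr ?_
  intro x hx
  obtain ⟨K, hKcomp, hKmem⟩ := exists_compact_mem_nhds (⟨x, hx⟩ : s)
  have hKclosed : IsClosed (Subtype.val '' K : Set H) :=
    (hKcomp.image continuous_subtype_val).isClosed
  rw [mem_nhds_subtype] at hKmem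
  obtain ⟨U, hU, hUK⟩ := hKmem
  obtain ⟨V, hVU, hVopen, hxV⟩ := mem_nhds_iff.mp hU
  refine ⟨V, hVopen.mem_nhds hxV, ?_⟩
  have : (V ↓∩ s) = (V ↓∩ (Subtype.val '' K)) := by
    ext ⟨y, hy⟩
    simp only [Set.preimage_setOf_eq, Set.mem_preimage]
    constructor
    · intro hys
      exact ⟨⟨y, hys⟩, hUK (hVU hy), rfl⟩
    · rintro ⟨⟨z, hz⟩, _, rfl⟩
      exact hz
  rw [this]
  exact hKclosed.preimage continuous_subtype_val

/-- A locally closed subgroup of a topological group is closed. -/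
lemma aux_subgroup_closed {H : Type*} [Group H] [TopologicalSpace H] [IsTopologicalGroup H]
    (K : Subgroup H) (h : IsLocallyClosed (K : Set H)) : IsClosed (K : Set H) := by
  set N := K.topologicalClosure with hN
  have hNclosed : IsClosed (N : Set H) := K.isClosed_topologicalClosure
  have hopen : IsOpen ((closure (K : Set H)) ↓∩ (K : Set H)) := h.isOpen_preimage_val_closure
  have hcoe : ((K.subgroupOf N : Subgroup N) : Set N) = (closure (K : Set H)) ↓∩ (K : Set H) := rfl
  have hopen' : IsOpen ((K.subgroupOf N : Subgroup N) : Set N) := by rw [hcoe]; exact hopen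
  have hclosed' : IsClosed ((K.subgroupOf N : Subgroup N) : Set N) :=
    (K.subgroupOf N).isClosed_of_isOpen hopen'
  have himg : Subtype.val '' ((K.subgroupOf N : Subgroup N) : Set N) = (K : Set H) := by
    ext y
    constructor
    · rintro ⟨⟨z, hz⟩, hz2, rfl⟩
      exact hz2
    · intro hy
      exact ⟨⟨y, K.le_topologicalClosure hy⟩, hy, rfl⟩
  rw [← himg]
  exact hNclosed.isClosedEmbedding_subtypeVal.isClosedMap _ hclosed'

theorem hereditarilyHComplete_of_LC_SIN {G : Type u}
    [Group G] [TopologicalSpace G] [IsTopologicalGroup G] [T2Space G]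
    [LocallyCompactSpace G] (hsin : IsSIN G)
    (htm : ∀ S : Subgroup G, IsClosed (S : Set G) → IsTotallyMinimal.{u, u} S) :
    IsHereditarilyHComplete.{u, u} G := by
  intro S hS
  intro H _ _ _ _ f hf
  haveI : LocallyCompactSpace S := hS.locallyCompactSpace
  set K : Subgroup H := f.range with hK
  have hf' : Continuous (f.rangeRestrict : S → K) := hf.subtype_mk _
  have hsurj : Function.Surjective (f.rangeRestrict : S → K) := f.rangeRestrict_surjective
  have hopen : IsOpenMap (f.rangeRestrict : S → K) :=
    htm S hS K f.rangeRestrict hf' hsurj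
  have hq : IsOpenQuotientMap (f.rangeRestrict : S → K) := ⟨hsurj, hf', hopen⟩
  haveI : LocallyCompactSpace K := hq.locallyCompactSpace
  haveI : LocallyCompactSpace (K : Set H) := ‹LocallyCompactSpace K›
  have : IsClosed (K : Set H) :=
    aux_subgroup_closed K (aux_isLocallyClosed (K : Set H))
  simpa [hK] using this
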